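/- For 0 < ν < 1 and λ = 1 − ν, the polynomial H(x,y) factors as H(x,y) = −2(ν−1)(x(yν−1)((x−1)yν − 1) + yν + 1), and the discriminant quartic W̃(x) := ν((x²−1)²νλ² + x(λ²+2xλ−ν²+1)(2λν + x(λ²+ν²−1))) factors as W̃(x) = ν²(1−ν)²(x−1)(x+1)(x−√5−2)(x+√5−2). -/
import Mathlib


noncomputable def H (v l x y : ℝ) : ℝ :=
  1 + l^2 - v^2 + 2*l*v*(1 - x^2)*y + 2*x*l*(1 - v^2*y^2) + x^2*y^2*v*(1 - l^2 - v^2)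

noncomputable def Wt (v l x : ℝ) : ℝ :=
  v*((x^2 - 1)^2*v*l^2 + x*(l^2 + 2*x*l - v^2 + 1)*(2*l*v + x*(l^2 + v^2 - 1)))

theorem stmt15 (v x y : ℝ) (hv0 : 0 < v) (hv1 : v < 1) :
    H v (1 - v) x y = -2*(v - 1)*(x*(y*v - 1)*((x - 1)*y*v - 1) + y*v + 1) ∧
    Wt v (1 - v) x
      = v^2*(1 - v)^2*(x - 1)*(x + 1)*(x - Real.sqrt 5 - 2)*(x + Real.sqrt 5 - 2) := by
  have h5 : Real.sqrt 5 ^ 2 = 5 := Real.sq_sqrt (by norm_num)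
  constructor
  · unfold H; ring
  · unfold Wt; linear_combination (v^2 * (1 - v)^2 * (x - 1) * (x + 1)) * h5
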